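/- Let T be a finite set of trajectories, X a finite set of terminal states, end : T → X with every fiber nonempty, U : X → ℝ a function with U(x) ≤ m for all x (m a fixed real number), and for σ > 0 define the temperature-conditioned reward R_σ(x) := exp((U(x) − m)/σ). Fix σ_0 > 0 and let F be a flow for R_{σ_0}. Then for every ε > 0 there exists δ > 0 such that for all σ ∈ (σ_0, σ_0 + δ), the function F_σ(s) := F(s) · R_σ(end(s)) / R_{σ_0}(end(s)) is a flow for R_σ and satisfies F_σ(s) − F(s) < ε for every trajectory s ∈ T. -/

import Mathlib

open Finset

/-- `F` is a flow for the reward `R` on the finite set of trajectories `T`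
with terminal-state map `e : T → X`: it is nonnegative and the total flow
into each terminal state `x` equals `R x`. -/
def IsFlow {T X : Type*} [Fintype T] [DecidableEq X] (e : T → X) (R : X → ℝ)
    (F : T → ℝ) : Prop :=
  (∀ s, 0 ≤ F s) ∧ ∀ x, ∑ s ∈ Finset.univ.filter (fun s => e s = x), F s = R x

theorem temperature_flow_neighborhood {T X : Type*} [Fintype T] [Fintype X] [DecidableEq X]
    (e : T → X) (hfib : ∀ x : X, ∃ s : T, e s = x)
    (U : X → ℝ) (m : ℝ) (hU : ∀ x, U x ≤ m)
    (σ₀ : ℝ) (hσ₀ : 0 < σ₀)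
    (F : T → ℝ) (hF : IsFlow e (fun x => Real.exp ((U x - m) / σ₀)) F) :
    ∀ ε > (0 : ℝ), ∃ δ > (0 : ℝ), ∀ σ : ℝ, σ₀ < σ → σ < σ₀ + δ →
      IsFlow e (fun x => Real.exp ((U x - m) / σ))
        (fun s => F s * Real.exp ((U (e s) - m) / σ) / Real.exp ((U (e s) - m) / σ₀)) ∧
      ∀ s, F s * Real.exp ((U (e s) - m) / σ) / Real.exp ((U (e s) - m) / σ₀) - F s < ε := by
  intro ε hε
  obtain ⟨hF0, hFsum⟩ := hF
  set B : ℝ := ∑ s : T, F s with hB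
  have hB0 : 0 ≤ B := Finset.sum_nonneg fun s _ => hF0 s
  have hFB : ∀ s, F s ≤ B := fun s =>
    Finset.single_le_sum (fun t _ => hF0 t) (Finset.mem_univ s)
  set M : ℝ := ∑ x : X, (m - U x) with hM
  have hM0 : 0 ≤ M := Finset.sum_nonneg fun x _ => by linarith [hU x]
  have hMx : ∀ x, m - U x ≤ M := fun x =>
    Finset.single_le_sum (f := fun y => m - U y) (fun y _ => by linarith [hU y])
      (Finset.mem_univ x)
  have hεB : 0 < ε / (B + 1) := by positivity
  have hc := Real.continuous_exp.continuousAt (x := (0 : ℝ))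
  rw [Metric.continuousAt_iff] at hc
  obtain ⟨δ', hδ', hcb⟩ := hc (ε / (B + 1)) hεB
  refine ⟨δ' * σ₀ ^ 2 / (M + 1), by positivity, fun σ hσ1 hσ2 => ?_⟩
  have hσpos : 0 < σ := lt_trans hσ₀ hσ1
  -- key bound on the exponent
  have key : ∀ x : X, Real.exp ((U x - m) / σ) / Real.exp ((U x - m) / σ₀)
      = Real.exp ((U x - m) / σ - (U x - m) / σ₀) := fun x => (Real.exp_sub _ _).symm
  have texp : ∀ x : X, 0 ≤ (U x - m) / σ - (U x - m) / σ₀ ∧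
      (U x - m) / σ - (U x - m) / σ₀ < δ' := by
    intro x
    have ht : (U x - m) / σ - (U x - m) / σ₀ = (m - U x) * (σ - σ₀) / (σ * σ₀) := by
      field_simp; ring
    constructor
    · rw [ht]
      have : 0 ≤ (m - U x) * (σ - σ₀) := by nlinarith [hU x]
      positivity
    · rw [ht]
      have h1 : (m - U x) * (σ - σ₀) ≤ M * (δ' * σ₀ ^ 2 / (M + 1)) := by
        have := hMx x
        have h2 : σ - σ₀ < δ' * σ₀ ^ 2 / (M + 1) := by linarith
        nlinarith [hU x, hM0]
      have h3 : σ₀ * σ₀ < σ * σ₀ := by nlinarith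
      calc (m - U x) * (σ - σ₀) / (σ * σ₀)
          ≤ M * (δ' * σ₀ ^ 2 / (M + 1)) / (σ * σ₀) := by
            apply div_le_div_of_nonneg_right h1 (by positivity) |>.trans_eq rfl
        _ ≤ M * (δ' * σ₀ ^ 2 / (M + 1)) / (σ₀ * σ₀) := by
            apply div_le_div_of_nonneg_left (by positivity) (by positivity) (by nlinarith)
        _ = δ' * (M / (M + 1)) := by field_simp
        _ < δ' := by
            have : M / (M + 1) < 1 := by
              rw [div_lt_one (by linarith)]; linarith
            nlinarith
  have expb : ∀ x : X, Real.exp ((U x - m) / σ - (U x - m) / σ₀) - 1 < ε / (B + 1) := by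
    intro x
    obtain ⟨h0, h1⟩ := texp x
    have := hcb (x := (U x - m) / σ - (U x - m) / σ₀) (by
      simpa [Real.dist_eq, abs_of_nonneg h0] using h1)
    rw [Real.dist_eq, Real.exp_zero] at this
    calc Real.exp _ - 1 ≤ |Real.exp ((U x - m) / σ - (U x - m) / σ₀) - 1| := le_abs_self _
      _ < ε / (B + 1) := this
  have exp1 : ∀ x : X, 1 ≤ Real.exp ((U x - m) / σ - (U x - m) / σ₀) := fun x =>
    Real.one_le_exp (texp x).1
  refine ⟨⟨fun s => div_nonneg (mul_nonneg (hF0 s) (Real.exp_pos _).le) (Real.exp_pos _).le, fun x => ?_⟩, fun s => ?_⟩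
  · have : ∀ s ∈ Finset.univ.filter (fun s => e s = x),
        F s * Real.exp ((U (e s) - m) / σ) / Real.exp ((U (e s) - m) / σ₀)
        = F s * (Real.exp ((U x - m) / σ) / Real.exp ((U x - m) / σ₀)) := by
      intro s hs
      rw [Finset.mem_filter] at hs
      rw [hs.2]; ring
    rw [Finset.sum_congr rfl this, ← Finset.sum_mul, hFsum x, key x, ← Real.exp_add]
    ring_nf
  · rw [mul_div_assoc, key (e s)]
    set t := (U (e s) - m) / σ - (U (e s) - m) / σ₀
    have h1 : F s * Real.exp t - F s = F s * (Real.exp t - 1) := by ring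
    rw [h1]
    calc F s * (Real.exp t - 1) ≤ B * (Real.exp t - 1) := by
          have := exp1 (e s); nlinarith [hFB s, hF0 s]
      _ ≤ B * (ε / (B + 1)) := by nlinarith [expb (e s), hB0]
      _ < ε := by
          rw [mul_div_assoc] at *
          have : B / (B + 1) < 1 := by rw [div_lt_one (by linarith)]; linarith
          calc B * (ε / (B+1)) = ε * (B / (B+1)) := by ring
            _ < ε * 1 := by nlinarith
            _ = ε := mul_one ε
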